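/- Under the source condition ξ = A*w ∈ ∂R(x†), for x_α^δ minimising the Tikhonov functional with data y^δ satisfying ‖y^δ − Ax†‖ ≤ δ, we have D_ξ(x_α^δ, x†) ≤ (1/2)(δ/√α + √α·‖w‖)² and ‖Ax_α^δ − y^δ‖ ≤ δ + 2‖w‖α. -/

import Mathlib

open RealInnerProductSpace

/-- Under the source condition `ξ = A* w ∈ ∂R(x†)`, the noisy-data Tikhonov
minimiser `x_α^δ` with `‖y^δ - A x†‖ ≤ δ` satisfies
`D_ξ(x_α^δ, x†) ≤ (1/2)(δ/√α + √α ‖w‖)²` and `‖A x_α^δ - y^δ‖ ≤ δ + 2 ‖w‖ α`. -/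
theorem stmt_12 {X Y : Type*} [NormedAddCommGroup X] [NormedSpace ℝ X]
    [NormedAddCommGroup Y] [InnerProductSpace ℝ Y] [CompleteSpace Y]
    (A : X →L[ℝ] Y) (R : X → ℝ) (hR : ConvexOn ℝ Set.univ R)
    (α δ : ℝ) (hα : 0 < α) (hδ : 0 ≤ δ) (xdag : X) (w : Y)
    (hsrc : ∀ u : X, R xdag + ⟪w, A (u - xdag)⟫ ≤ R u)
    (yδ : Y) (hnoise : ‖yδ - A xdag‖ ≤ δ) (xαδ : X)
    (hmin : ∀ x : X, (1 / 2) * ‖A xαδ - yδ‖ ^ 2 + α * R xαδ ≤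
      (1 / 2) * ‖A x - yδ‖ ^ 2 + α * R x) :
    R xαδ - R xdag - ⟪w, A (xαδ - xdag)⟫ ≤
      (1 / 2) * (δ / Real.sqrt α + Real.sqrt α * ‖w‖) ^ 2 ∧
    ‖A xαδ - yδ‖ ≤ δ + 2 * ‖w‖ * α := by
  set r := ‖A xαδ - yδ‖ with hr
  have hr0 : 0 ≤ r := norm_nonneg _
  have hw0 : 0 ≤ ‖w‖ := norm_nonneg _
  have hD0 : 0 ≤ R xαδ - R xdag - ⟪w, A (xαδ - xdag)⟫ := by linarith [hsrc xαδ]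
  have hm := hmin xdag
  have hdag : ‖A xdag - yδ‖ = ‖yδ - A xdag‖ := norm_sub_rev _ _
  have hdagδ : ‖A xdag - yδ‖ ≤ δ := by rw [hdag]; exact hnoise
  have hm2 : (1 / 2) * r ^ 2 + α * R xαδ ≤ (1 / 2) * δ ^ 2 + α * R xdag := by
    have : ‖A xdag - yδ‖ ^ 2 ≤ δ ^ 2 := by
      apply pow_le_pow_left₀ (norm_nonneg _) hdagδ
    linarith
  have hip : ⟪w, A (xαδ - xdag)⟫ = ⟪w, A xαδ - yδ⟫ + ⟪w, yδ - A xdag⟫ := by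
    rw [← inner_add_right]
    congr 1
    rw [map_sub]
    abel
  have hc1 : -(‖w‖ * r) ≤ ⟪w, A xαδ - yδ⟫ := by
    have := abs_real_inner_le_norm w (A xαδ - yδ)
    rw [abs_le] at this
    exact this.1
  have hc2 : -(‖w‖ * δ) ≤ ⟪w, yδ - A xdag⟫ := by
    have h := abs_real_inner_le_norm w (yδ - A xdag)
    rw [abs_le] at h
    have : ‖w‖ * ‖yδ - A xdag‖ ≤ ‖w‖ * δ := by
      exact mul_le_mul_of_nonneg_left hnoise hw0
    linarith [h.1]
  -- key inequality
  have hkey : (1 / 2) * r ^ 2 + α * (R xαδ - R xdag - ⟪w, A (xαδ - xdag)⟫) ≤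
      (1 / 2) * δ ^ 2 + α * ‖w‖ * r + α * ‖w‖ * δ := by
    have hbnd : -(‖w‖ * r + ‖w‖ * δ) ≤ ⟪w, A (xαδ - xdag)⟫ := by
      rw [hip]; linarith
    nlinarith [mul_le_mul_of_nonneg_left hbnd hα.le]
  have hsq : (1 / 2) * (r - α * ‖w‖) ^ 2 + α * (R xαδ - R xdag - ⟪w, A (xαδ - xdag)⟫) ≤
      (1 / 2) * (δ + α * ‖w‖) ^ 2 := by nlinarith
  constructor
  · -- Bregman bound
    have hαD : α * (R xαδ - R xdag - ⟪w, A (xαδ - xdag)⟫) ≤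
        (1 / 2) * (δ + α * ‖w‖) ^ 2 := by nlinarith [sq_nonneg (r - α * ‖w‖)]
    have hs : Real.sqrt α ^ 2 = α := Real.sq_sqrt hα.le
    have hspos : 0 < Real.sqrt α := Real.sqrt_pos.mpr hα
    have heq : (1 / 2) * (δ / Real.sqrt α + Real.sqrt α * ‖w‖) ^ 2 =
        (1 / 2) * (δ + α * ‖w‖) ^ 2 / α := by
      rw [← hs]
      field_simp
      rw [Real.sqrt_sq hspos.le]
    rw [heq, le_div_iff₀ hα]
    nlinarith
  · -- residual bound
    have h2 : (r - α * ‖w‖) ^ 2 ≤ (δ + α * ‖w‖) ^ 2 := by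
      have := mul_nonneg hα.le hD0
      linarith
    have hb : 0 ≤ δ + α * ‖w‖ := by positivity
    have h3 : |r - α * ‖w‖| ≤ δ + α * ‖w‖ := by
      have h4 : |r - α * ‖w‖| ^ 2 ≤ (δ + α * ‖w‖) ^ 2 := by rw [sq_abs]; exact h2
      exact (pow_le_pow_iff_left₀ (abs_nonneg _) hb two_ne_zero).mp h4
    have h5 := (abs_le.mp h3).2
    linarith
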